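/- Let (Ω,P) be a probability space and A_1, …, A_m events. For any random vector of weights, the quadratic form ∑_{i,j} ω_i ω_j P(A_i ∩ A_j) equals E[(∑_i ω_i 1_{A_i})²], and by Cauchy–Schwarz applied on the event ⋃_i A_i, (∑_i ω_i P(A_i))² ≤ P(⋃_{i=1}^m A_i) · ∑_{i,j} ω_i ω_j P(A_i ∩ A_j) for every (ω_1,…,ω_m) ∈ ℝ^m. -/

import Mathlib

open MeasureTheory Filter Set

theorem quadratic_form_and_cauchy_schwarz {Ω : Type*} [MeasurableSpace Ω] (μ : Measure Ω)
    [IsProbabilityMeasure μ] (m : ℕ) (A : Fin m → Set Ω)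
    (hA : ∀ i, MeasurableSet (A i)) (ω : Fin m → ℝ) :
    (∑ i, ∑ j, ω i * ω j * (μ (A i ∩ A j)).toReal) =
        ∫ x, (∑ i, ω i * (A i).indicator (1 : Ω → ℝ) x) ^ 2 ∂μ ∧
      (∑ i, ω i * (μ (A i)).toReal) ^ 2 ≤
        (μ (⋃ i, A i)).toReal * ∑ i, ∑ j, ω i * ω j * (μ (A i ∩ A j)).toReal := by
  set f : Ω → ℝ := fun x => ∑ i, ω i * (A i).indicator (1 : Ω → ℝ) x with hf
  have hind : ∀ s : Set Ω, MeasurableSet s →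
      Integrable (s.indicator (1 : Ω → ℝ)) μ :=
    fun s hs => (integrable_const (1 : ℝ)).indicator hs
  have hintf : Integrable f μ := by
    apply integrable_finset_sum
    intro i _
    exact ((hind _ (hA i)).const_mul (ω i))
  have hsq : ∀ x, f x ^ 2 =
      ∑ i, ∑ j, ω i * ω j * (A i ∩ A j).indicator (1 : Ω → ℝ) x := by
    intro x
    rw [hf, sq, Finset.sum_mul_sum]
    refine Finset.sum_congr rfl fun i _ => Finset.sum_congr rfl fun j _ => ?_
    rw [Set.inter_indicator_one]
    simp only [Pi.mul_apply]
    ring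
  have hintf2 : Integrable (fun x => f x ^ 2) μ := by
    rw [show (fun x => f x ^ 2) = fun x =>
        ∑ i, ∑ j, ω i * ω j * (A i ∩ A j).indicator (1 : Ω → ℝ) x from funext hsq]
    apply integrable_finset_sum
    intro i _
    apply integrable_finset_sum
    intro j _
    exact (hind _ ((hA i).inter (hA j))).const_mul _
  -- Part 1
  have h1 : (∑ i, ∑ j, ω i * ω j * (μ (A i ∩ A j)).toReal) =
      ∫ x, f x ^ 2 ∂μ := by
    simp only [hsq]
    rw [integral_finset_sum _ (fun i _ => integrable_finset_sum _
      (fun j _ => (hind _ ((hA i).inter (hA j))).const_mul _))]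
    refine Finset.sum_congr rfl fun i _ => ?_
    rw [integral_finset_sum _ (fun j _ => (hind _ ((hA i).inter (hA j))).const_mul _)]
    refine Finset.sum_congr rfl fun j _ => ?_
    rw [integral_const_mul, integral_indicator_one ((hA i).inter (hA j)), Measure.real]
  -- integral of f
  have hI : ∫ x, f x ∂μ = ∑ i, ω i * (μ (A i)).toReal := by
    rw [hf, integral_finset_sum _ (fun i _ => (hind _ (hA i)).const_mul _)]
    refine Finset.sum_congr rfl fun i _ => ?_
    rw [integral_const_mul, integral_indicator_one (hA i), Measure.real]
  -- the union indicator
  set g : Ω → ℝ := (⋃ i, A i).indicator (1 : Ω → ℝ) with hg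
  have hU : MeasurableSet (⋃ i, A i) := MeasurableSet.iUnion fun i => hA i
  have hintg : Integrable g μ := hind _ hU
  have hgg : ∀ x, g x * g x = g x := by
    intro x
    by_cases hx : x ∈ ⋃ i, A i <;> simp [hg, Set.indicator_apply, hx]
  have hfg : ∀ x, f x * g x = f x := by
    intro x
    by_cases hx : x ∈ ⋃ i, A i
    · simp [hg, Set.indicator_apply, hx]
    · have : ∀ i, x ∉ A i := fun i hi => hx (Set.mem_iUnion.2 ⟨i, hi⟩)
      simp [hg, hf, Set.indicator_apply, hx, this]
  -- quadratic in t is nonneg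
  have key : ∀ t : ℝ, 0 ≤ (μ (⋃ i, A i)).toReal * (t * t) +
      (-2 * (∑ i, ω i * (μ (A i)).toReal)) * t + ∫ x, f x ^ 2 ∂μ := by
    intro t
    have hexp : ∀ x, (t * g x - f x) ^ 2 =
        (t * t) * g x + (-2 * t) * f x + f x ^ 2 := by
      intro x
      have he : (t * g x - f x) ^ 2 =
          (t * t) * (g x * g x) + (-2 * t) * (f x * g x) + f x ^ 2 := by ring
      rw [he, hgg x, hfg x]
    have hnn : 0 ≤ ∫ x, (t * g x - f x) ^ 2 ∂μ :=
      integral_nonneg fun x => sq_nonneg _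
    have hint1 : Integrable (fun x => (t * t) * g x) μ := hintg.const_mul _
    have hint2 : Integrable (fun x => (-2 * t) * f x) μ := hintf.const_mul _
    calc (0:ℝ) ≤ ∫ x, (t * g x - f x) ^ 2 ∂μ := hnn
      _ = ∫ x, ((t * t) * g x + (-2 * t) * f x + f x ^ 2) ∂μ := by
          exact integral_congr_ae (Filter.Eventually.of_forall fun x => hexp x)
      _ = (∫ x, (t * t) * g x ∂μ) + (∫ x, (-2 * t) * f x ∂μ) + ∫ x, f x ^ 2 ∂μ := by
          have e1 : ∫ x, ((t * t) * g x + (-2 * t) * f x) + f x ^ 2 ∂μ =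
              (∫ x, (t * t) * g x + (-2 * t) * f x ∂μ) + ∫ x, f x ^ 2 ∂μ :=
            integral_add (hint1.add hint2) hintf2
          have e2 : ∫ x, (t * t) * g x + (-2 * t) * f x ∂μ =
              (∫ x, (t * t) * g x ∂μ) + ∫ x, (-2 * t) * f x ∂μ :=
            integral_add hint1 hint2
          rw [e1, e2]
      _ = (μ (⋃ i, A i)).toReal * (t * t) +
          (-2 * (∑ i, ω i * (μ (A i)).toReal)) * t + ∫ x, f x ^ 2 ∂μ := by
          rw [integral_const_mul, integral_const_mul, hg, integral_indicator_one hU, hI, Measure.real]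
          ring
  have hdis := discrim_le_zero key
  rw [discrim] at hdis
  refine ⟨h1, ?_⟩
  rw [h1]
  nlinarith [hdis]
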